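/- Let (Ω, 𝓕, P) be a probability space with filtration (𝓕_n)_{n≥0}, let δ ∈ (0, 1/2) and C_p > 0, and let (X_n)_{n≥1} be {0,1}-valued random variables such that X_n is 𝓕_n-measurable and E[X_n | 𝓕_{n−1}] ≥ C_p · n^{−δ} almost surely for every n ≥ 1. Then for every C ∈ (0, C_p): ∑_{n=1}^{∞} n · P( ∑_{m=1}^{n} X_m < C · n^{1−δ} ) < ∞. -/

import Mathlib

open MeasureTheory

section AuxStmt17
open Finset Real


lemma exp_le_add_exp_sq (x : ℝ) : Real.exp x ≤ x + Real.exp (x ^ 2) := by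
  rcases le_or_gt |x| 1 with h | h
  · have h2 := Real.exp_bound h (by norm_num : 0 < 2)
    have hs : ∑ i ∈ Finset.range 2, x ^ i / (Nat.factorial i : ℝ) = 1 + x := by
      simp [Finset.sum_range_succ, Nat.factorial]
    rw [hs] at h2
    norm_num [Nat.factorial] at h2
    have h3 : Real.exp x ≤ 1 + x + x ^ 2 := by
      have := abs_le.1 h2
      have hx2 : |x| ^ 2 = x ^ 2 := sq_abs x
      nlinarith [this.2, sq_nonneg x]
    have h4 : 1 + x ^ 2 ≤ Real.exp (x ^ 2) := by
      linarith [Real.add_one_le_exp (x ^ 2)]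
    linarith
  · rcases le_or_gt 0 x with hx | hx
    · have h1 : x ≤ x ^ 2 := by nlinarith [abs_of_nonneg hx]
      have := Real.exp_le_exp.2 h1
      linarith
    · have hx1 : 1 < -x := by rwa [abs_of_neg hx] at h
      have h1 : Real.exp x ≤ 1 := Real.exp_le_one_iff.2 hx.le
      have h3 : 1 + x ^ 2 ≤ Real.exp (x ^ 2) := by linarith [Real.add_one_le_exp (x ^ 2)]
      nlinarith

/-- summability of `n * exp (-c * n ^ η)` for `c, η > 0`. -/
lemma summable_mul_exp_neg_rpow {c η : ℝ} (hc : 0 < c) (hη : 0 < η) :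
    Summable (fun n : ℕ => (n : ℝ) * Real.exp (-(c * (n : ℝ) ^ η))) := by
  obtain ⟨K, hK⟩ := exists_nat_ge (3 / η)
  have hK3 : 3 ≤ (K : ℝ) * η := by
    rw [div_le_iff₀ hη] at hK; linarith
  have hsum : Summable (fun n : ℕ => (Nat.factorial K : ℝ) / c ^ K * (n : ℝ) ^ (-2 : ℝ)) :=
    (Real.summable_nat_rpow.2 (by norm_num)).mul_left _
  refine hsum.of_nonneg_of_le (fun n => by positivity) (fun n => ?_)
  rcases Nat.eq_zero_or_pos n with rfl | hn
  · simp
  have hn1 : (1 : ℝ) ≤ (n : ℝ) := by exact_mod_cast hn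
  have hnpos : (0 : ℝ) < (n : ℝ) := by linarith
  set a : ℝ := c * (n : ℝ) ^ η with ha
  have hapos : 0 < a := by positivity
  have h1 : a ^ K / (Nat.factorial K : ℝ) ≤ Real.exp a :=
    Real.pow_div_factorial_le_exp a hapos.le K
  have h2 : Real.exp (-a) ≤ (Nat.factorial K : ℝ) / a ^ K := by
    rw [Real.exp_neg]
    have hpos : (0:ℝ) < a ^ K / (Nat.factorial K : ℝ) := by positivity
    calc (Real.exp a)⁻¹ ≤ (a ^ K / (Nat.factorial K : ℝ))⁻¹ := by
          exact inv_anti₀ hpos h1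
      _ = (Nat.factorial K : ℝ) / a ^ K := by rw [inv_div]
  calc (n : ℝ) * Real.exp (-a)
      ≤ (n : ℝ) * ((Nat.factorial K : ℝ) / a ^ K) :=
        mul_le_mul_of_nonneg_left h2 (by positivity)
    _ = (Nat.factorial K : ℝ) / c ^ K * (n : ℝ) ^ (1 - η * K) := by
        have e1 : a ^ K = c ^ K * (n : ℝ) ^ (η * K) := by
          rw [ha, mul_pow, ← Real.rpow_natCast ((n:ℝ)^η) K, ← Real.rpow_mul hnpos.le]
        rw [e1, show (1 - η * (K:ℝ)) = 1 + (-(η * K)) by ring, Real.rpow_add hnpos,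
          Real.rpow_one, Real.rpow_neg hnpos.le]
        have h3 : ((n:ℝ) ^ (η * (K:ℝ))) ≠ 0 := by positivity
        have h4 : (c:ℝ) ^ K ≠ 0 := by positivity
        field_simp
    _ ≤ (Nat.factorial K : ℝ) / c ^ K * (n : ℝ) ^ (-2 : ℝ) := by
        refine mul_le_mul_of_nonneg_left ?_ (by positivity)
        exact Real.rpow_le_rpow_of_exponent_le hn1 (by nlinarith)


lemma exp_moment_bound {Ω : Type*} {m0 : MeasurableSpace Ω} (P : Measure Ω)
    [IsProbabilityMeasure P] (ℱ : Filtration ℕ m0)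
    (X : ℕ → Ω → ℝ) (hX01 : ∀ n ω, X n ω = 0 ∨ X n ω = 1)
    (hXmeas : ∀ n, 1 ≤ n → Measurable[ℱ n] (X n)) (l : ℝ) :
    ∀ n : ℕ, Integrable (fun ω => Real.exp (l * ((∑ m ∈ Finset.Icc 1 n, (P[X m | ℱ (m-1)]) ω)
        - ∑ m ∈ Finset.Icc 1 n, X m ω))) P ∧
      ∫ ω, Real.exp (l * ((∑ m ∈ Finset.Icc 1 n, (P[X m | ℱ (m-1)]) ω)
        - ∑ m ∈ Finset.Icc 1 n, X m ω)) ∂P ≤ Real.exp (n * l ^ 2) := by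
  set p : ℕ → Ω → ℝ := fun m => P[X m | ℱ (m-1)] with hp
  have hX0 : ∀ m ω, 0 ≤ X m ω := fun m ω => by rcases hX01 m ω with h | h <;> simp [h]
  have hX1 : ∀ m ω, X m ω ≤ 1 := fun m ω => by rcases hX01 m ω with h | h <;> simp [h]
  have hXm0 : ∀ m, 1 ≤ m → Measurable (X m) :=
    fun m hm => (hXmeas m hm).mono (ℱ.le m) le_rfl
  have hXint : ∀ m, 1 ≤ m → Integrable (X m) P := fun m hm =>
    (integrable_const (1 : ℝ)).mono' (hXm0 m hm).aestronglyMeasurable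
      (Filter.Eventually.of_forall fun ω => by
        rw [Real.norm_eq_abs, abs_of_nonneg (hX0 m ω)]; exact hX1 m ω)
  have hp_meas : ∀ m, Measurable (p m) := fun m =>
    stronglyMeasurable_condExp.measurable.mono (ℱ.le (m-1)) le_rfl
  have hp_bound : ∀ᵐ ω ∂P, ∀ m, 0 ≤ p m ω ∧ p m ω ≤ 1 := by
    rw [ae_all_iff]
    intro m
    have h0 : 0 ≤ᵐ[P] p m :=
      condExp_nonneg (Filter.Eventually.of_forall fun ω => hX0 m ω)
    have h1 : p m ≤ᵐ[P] P[(fun _ => (1:ℝ)) | ℱ (m-1)] := by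
      rcases Nat.eq_zero_or_pos m with rfl | hm
      · -- m = 0 : X 0 may not be measurable/integrable; handle separately
        by_cases hi : Integrable (X 0) P
        · exact condExp_mono hi (integrable_const 1)
            (Filter.Eventually.of_forall fun ω => hX1 0 ω)
        · rw [hp]
          simp only [condExp_of_not_integrable hi]
          rw [condExp_const (ℱ.le (0-1)) (1:ℝ)]
          exact Filter.Eventually.of_forall fun ω => by norm_num
      · exact condExp_mono (hXint m hm) (integrable_const 1)
          (Filter.Eventually.of_forall fun ω => hX1 m ω)
    have hc : P[(fun _ => (1:ℝ)) | ℱ (m-1)] = fun _ => (1:ℝ) := condExp_const (ℱ.le (m-1)) (1:ℝ)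
    filter_upwards [h0, h1] with ω h0ω h1ω
    exact ⟨h0ω, by rw [hc] at h1ω; exact h1ω⟩
  -- the exponential process
  set W : ℕ → Ω → ℝ := fun n ω =>
    Real.exp (l * ((∑ m ∈ Finset.Icc 1 n, p m ω) - ∑ m ∈ Finset.Icc 1 n, X m ω)) with hW
  have hW_meas : ∀ n, Measurable[ℱ n] (W n) := by
    intro n
    have hA : Measurable[ℱ n] (fun ω => ∑ m ∈ Finset.Icc 1 n, p m ω) := by
      refine Finset.measurable_sum _ fun m hm => ?_
      have hmn : m - 1 ≤ n := le_trans (Nat.sub_le m 1) (Finset.mem_Icc.1 hm).2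
      exact (stronglyMeasurable_condExp (m := ℱ (m-1))).measurable.mono (ℱ.mono hmn) le_rfl
    have hS : Measurable[ℱ n] (fun ω => ∑ m ∈ Finset.Icc 1 n, X m ω) := by
      refine Finset.measurable_sum _ fun m hm => ?_
      exact (hXmeas m (Finset.mem_Icc.1 hm).1).mono (ℱ.mono (Finset.mem_Icc.1 hm).2) le_rfl
    exact ((hA.sub hS).const_mul l).exp
  have hW_pos : ∀ n ω, 0 < W n ω := fun n ω => Real.exp_pos _
  have hW_bound : ∀ n, ∀ᵐ ω ∂P, ‖W n ω‖ ≤ Real.exp (|l| * n) := by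
    intro n
    filter_upwards [hp_bound] with ω hgood
    have hA0 : 0 ≤ ∑ m ∈ Finset.Icc 1 n, p m ω :=
      Finset.sum_nonneg fun m _ => (hgood m).1
    have hA1 : ∑ m ∈ Finset.Icc 1 n, p m ω ≤ n := by
      calc ∑ m ∈ Finset.Icc 1 n, p m ω ≤ ∑ m ∈ Finset.Icc 1 n, (1:ℝ) :=
            Finset.sum_le_sum fun m _ => (hgood m).2
        _ = n := by simp [Nat.card_Icc]
    have hS0 : 0 ≤ ∑ m ∈ Finset.Icc 1 n, X m ω :=
      Finset.sum_nonneg fun m _ => hX0 m ω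
    have hS1 : ∑ m ∈ Finset.Icc 1 n, X m ω ≤ n := by
      calc ∑ m ∈ Finset.Icc 1 n, X m ω ≤ ∑ m ∈ Finset.Icc 1 n, (1:ℝ) :=
            Finset.sum_le_sum fun m _ => hX1 m ω
        _ = n := by simp [Nat.card_Icc]
    rw [Real.norm_eq_abs, abs_of_pos (hW_pos n ω), Real.exp_le_exp]
    calc l * ((∑ m ∈ Finset.Icc 1 n, p m ω) - ∑ m ∈ Finset.Icc 1 n, X m ω)
        ≤ |l * ((∑ m ∈ Finset.Icc 1 n, p m ω) - ∑ m ∈ Finset.Icc 1 n, X m ω)| := le_abs_self _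
      _ = |l| * |(∑ m ∈ Finset.Icc 1 n, p m ω) - ∑ m ∈ Finset.Icc 1 n, X m ω| := abs_mul _ _
      _ ≤ |l| * n := by
          refine mul_le_mul_of_nonneg_left ?_ (abs_nonneg l)
          rw [abs_le]; constructor <;> linarith
  have hW_int : ∀ n, Integrable (W n) P := fun n =>
    (integrable_const _).mono'
      (((hW_meas n).mono (ℱ.le n) le_rfl).aestronglyMeasurable) (hW_bound n)
  -- induction
  suffices h : ∀ n : ℕ, ∫ ω, W n ω ∂P ≤ Real.exp (n * l ^ 2) from
    fun n => ⟨hW_int n, h n⟩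
  intro n
  induction n with
  | zero => simp [hW]
  | succ n ih =>
    have hn1 : (1:ℕ) ≤ n + 1 := Nat.le_add_left 1 n
    have hpn : p (n+1) = P[X (n+1) | ℱ n] := by rw [hp]; norm_num
    have hWX_int : Integrable (fun ω => W n ω * X (n+1) ω) P := by
      refine (integrable_const (Real.exp (|l| * n) * 1)).mono'
        ((((hW_meas n).mono (ℱ.le n) le_rfl).mul (hXm0 _ hn1)).aestronglyMeasurable) ?_
      filter_upwards [hW_bound n] with ω hb
      rw [Real.norm_eq_abs, abs_mul]
      refine mul_le_mul ?_ ?_ (abs_nonneg _) (Real.exp_nonneg _)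
      · rwa [Real.norm_eq_abs] at hb
      · rw [abs_of_nonneg (hX0 _ ω)]; exact hX1 _ ω
    have hWp_int : Integrable (fun ω => W n ω * p (n+1) ω) P := by
      refine (integrable_const (Real.exp (|l| * n) * 1)).mono'
        ((((hW_meas n).mono (ℱ.le n) le_rfl).mul (hp_meas _)).aestronglyMeasurable) ?_
      filter_upwards [hW_bound n, hp_bound] with ω hb hg
      rw [Real.norm_eq_abs, abs_mul]
      refine mul_le_mul ?_ ?_ (abs_nonneg _) (Real.exp_nonneg _)
      · rwa [Real.norm_eq_abs] at hb
      · rw [abs_of_nonneg (hg (n+1)).1]; exact (hg (n+1)).2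
    -- pull-out property
    have key : ∫ ω, W n ω * X (n+1) ω ∂P = ∫ ω, W n ω * p (n+1) ω ∂P := by
      have hsm : StronglyMeasurable[ℱ n] (W n) := (hW_meas n).stronglyMeasurable
      have h1 : P[(W n) * (X (n+1)) | ℱ n] =ᵐ[P] (W n) * P[X (n+1) | ℱ n] :=
        condExp_mul_of_stronglyMeasurable_left hsm hWX_int (hXint _ hn1)
      calc ∫ ω, W n ω * X (n+1) ω ∂P
          = ∫ ω, (P[(W n) * (X (n+1)) | ℱ n]) ω ∂P := (integral_condExp (ℱ.le n)).symm
        _ = ∫ ω, W n ω * (P[X (n+1) | ℱ n]) ω ∂P := integral_congr_ae h1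
        _ = ∫ ω, W n ω * p (n+1) ω ∂P := by rw [hpn]
    -- pointwise bound
    have hstep : ∀ᵐ ω ∂P, W (n+1) ω ≤
        l * (W n ω * p (n+1) ω) - l * (W n ω * X (n+1) ω) + Real.exp (l^2) * W n ω := by
      filter_upwards [hp_bound] with ω hg
      have hWeq : W (n+1) ω = W n ω * Real.exp (l * (p (n+1) ω - X (n+1) ω)) := by
        rw [hW]
        simp only
        rw [Finset.sum_Icc_succ_top hn1, Finset.sum_Icc_succ_top hn1, ← Real.exp_add]
        ring_nf
      have hd : |p (n+1) ω - X (n+1) ω| ≤ 1 := by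
        have := (hg (n+1)).1; have := (hg (n+1)).2
        rcases hX01 (n+1) ω with h | h <;> rw [h] <;> rw [abs_le] <;> constructor <;> linarith
      have hexp : Real.exp (l * (p (n+1) ω - X (n+1) ω)) ≤
          l * (p (n+1) ω - X (n+1) ω) + Real.exp (l^2) := by
        refine (exp_le_add_exp_sq _).trans (add_le_add le_rfl (Real.exp_le_exp.2 ?_))
        calc (l * (p (n+1) ω - X (n+1) ω))^2 = l^2 * (p (n+1) ω - X (n+1) ω)^2 := by ring
          _ ≤ l^2 * 1 := by
              refine mul_le_mul_of_nonneg_left ?_ (sq_nonneg l)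
              rw [← sq_abs]
              exact pow_le_one₀ (abs_nonneg _) hd
          _ = l^2 := mul_one _
      calc W (n+1) ω = W n ω * Real.exp (l * (p (n+1) ω - X (n+1) ω)) := hWeq
        _ ≤ W n ω * (l * (p (n+1) ω - X (n+1) ω) + Real.exp (l^2)) :=
            mul_le_mul_of_nonneg_left hexp (hW_pos n ω).le
        _ = l * (W n ω * p (n+1) ω) - l * (W n ω * X (n+1) ω) + Real.exp (l^2) * W n ω := by ring
    have hRHS_int : Integrable (fun ω =>
        l * (W n ω * p (n+1) ω) - l * (W n ω * X (n+1) ω) + Real.exp (l^2) * W n ω) P :=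
      (((hWp_int.const_mul l).sub (hWX_int.const_mul l)).add ((hW_int n).const_mul _))
    calc ∫ ω, W (n+1) ω ∂P
        ≤ ∫ ω, (l * (W n ω * p (n+1) ω) - l * (W n ω * X (n+1) ω)
            + Real.exp (l^2) * W n ω) ∂P := integral_mono_ae (hW_int (n+1)) hRHS_int hstep
      _ = l * ∫ ω, W n ω * p (n+1) ω ∂P - l * ∫ ω, W n ω * X (n+1) ω ∂P
            + Real.exp (l^2) * ∫ ω, W n ω ∂P := by
          have hg1 : Integrable (fun ω => l * (W n ω * p (n+1) ω)) P := hWp_int.const_mul l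
          have hg2 : Integrable (fun ω => l * (W n ω * X (n+1) ω)) P := hWX_int.const_mul l
          have hf1 : Integrable (fun ω =>
              l * (W n ω * p (n+1) ω) - l * (W n ω * X (n+1) ω)) P := hg1.sub hg2
          have hf2 : Integrable (fun ω => Real.exp (l^2) * W n ω) P := (hW_int n).const_mul _
          rw [integral_add hf1 hf2, integral_sub hg1 hg2,
            integral_const_mul, integral_const_mul, integral_const_mul]
      _ = Real.exp (l^2) * ∫ ω, W n ω ∂P := by rw [key]; ring
      _ ≤ Real.exp (l^2) * Real.exp (n * l^2) :=
          mul_le_mul_of_nonneg_left ih (Real.exp_nonneg _)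
      _ = Real.exp ((n+1 : ℕ) * l^2) := by rw [← Real.exp_add]; push_cast; ring_nf


end AuxStmt17

/-- core estimate of Proposition 6.3(ii): if `X_n ∈ {0,1}` is
`𝓕_n`-measurable with `E[X_n | 𝓕_{n−1}] ≥ C_p n^{−δ}` a.s. for every `n ≥ 1`, where
`δ ∈ (0,1/2)` and `C_p > 0`, then for every `C ∈ (0, C_p)`,
`∑_n n · P(∑_{m=1}^n X_m < C n^{1−δ}) < ∞`. -/
theorem stmt_17 {Ω : Type*} {m0 : MeasurableSpace Ω} (P : Measure Ω) [IsProbabilityMeasure P]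
    (ℱ : Filtration ℕ m0)
    (δ : ℝ) (hδ0 : 0 < δ) (hδ : δ < 1 / 2) (Cp : ℝ) (hCp : 0 < Cp)
    (X : ℕ → Ω → ℝ) (hX01 : ∀ n ω, X n ω = 0 ∨ X n ω = 1)
    (hXmeas : ∀ n, 1 ≤ n → Measurable[ℱ n] (X n))
    (hcond : ∀ n : ℕ, 1 ≤ n → ∀ᵐ ω ∂P, Cp * (n : ℝ) ^ (-δ) ≤ (P[X n | ℱ (n - 1)]) ω) :
    ∀ C : ℝ, 0 < C → C < Cp →
      ∑' n : ℕ, (n : ENNReal) *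
        P {ω | (∑ m ∈ Finset.Icc 1 n, X m ω) < C * (n : ℝ) ^ (1 - δ)} < ⊤ := by
  intro C hC0 hCC
  set ε : ℝ := Cp - C with hε
  have hε0 : 0 < ε := by simp [hε]; linarith
  set η : ℝ := 1 - 2 * δ with hη
  have hη0 : 0 < η := by simp [hη]; linarith
  set c : ℝ := ε ^ 2 / 4 with hc
  have hc0 : 0 < c := by positivity
  set p : ℕ → Ω → ℝ := fun m => P[X m | ℱ (m - 1)] with hp
  -- the ae lower bound on conditional probabilities, all m at once
  have hae : ∀ᵐ ω ∂P, ∀ m : ℕ, 1 ≤ m → Cp * (m : ℝ) ^ (-δ) ≤ p m ω := by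
    rw [ae_all_iff]
    intro m
    by_cases hm : 1 ≤ m
    · filter_upwards [hcond m hm] with ω h _; exact h
    · filter_upwards with ω h; exact absurd h hm
  -- the key tail estimate
  have claim : ∀ n : ℕ, 1 ≤ n →
      P {ω | (∑ m ∈ Finset.Icc 1 n, X m ω) < C * (n : ℝ) ^ (1 - δ)} ≤
        ENNReal.ofReal (Real.exp (-(c * (n : ℝ) ^ η))) := by
    intro n hn
    have hnpos : (0 : ℝ) < (n : ℝ) := by exact_mod_cast hn
    set l : ℝ := (ε / 2) * (n : ℝ) ^ (-δ) with hl
    have hl0 : 0 < l := by positivity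
    set t : ℝ := ε * (n : ℝ) ^ (1 - δ) with ht
    obtain ⟨hWint, hWmom⟩ := exp_moment_bound P ℱ X hX01 hXmeas l n
    set W : Ω → ℝ := fun ω => Real.exp (l * ((∑ m ∈ Finset.Icc 1 n, p m ω)
        - ∑ m ∈ Finset.Icc 1 n, X m ω)) with hWdef
    -- a.e. lower bound on the sum of conditional probabilities
    have hA : ∀ᵐ ω ∂P, Cp * (n : ℝ) ^ (1 - δ) ≤ ∑ m ∈ Finset.Icc 1 n, p m ω := by
      filter_upwards [hae] with ω h
      have h1 : ∀ m ∈ Finset.Icc 1 n, Cp * (n : ℝ) ^ (-δ) ≤ p m ω := by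
        intro m hm
        obtain ⟨hm1, hmn⟩ := Finset.mem_Icc.1 hm
        have hmpos : (0 : ℝ) < (m : ℝ) := by exact_mod_cast hm1
        have hr : (n : ℝ) ^ (-δ) ≤ (m : ℝ) ^ (-δ) :=
          Real.rpow_le_rpow_of_nonpos hmpos (by exact_mod_cast hmn) (by linarith)
        exact le_trans (mul_le_mul_of_nonneg_left hr hCp.le) (h m hm1)
      calc Cp * (n : ℝ) ^ (1 - δ) = (n : ℝ) * (Cp * (n : ℝ) ^ (-δ)) := by
            rw [show (1 - δ : ℝ) = 1 + (-δ) by ring, Real.rpow_add hnpos, Real.rpow_one]; ring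
        _ = ∑ m ∈ Finset.Icc 1 n, Cp * (n : ℝ) ^ (-δ) := by
            rw [Finset.sum_const, Nat.card_Icc, nsmul_eq_mul]; norm_num
        _ ≤ ∑ m ∈ Finset.Icc 1 n, p m ω := Finset.sum_le_sum h1
    -- event inclusion
    have hsub : P {ω | (∑ m ∈ Finset.Icc 1 n, X m ω) < C * (n : ℝ) ^ (1 - δ)} ≤
        P {ω | Real.exp (l * t) ≤ W ω} := by
      refine measure_mono_ae ?_
      filter_upwards [hA] with ω hAω hEω
      have hEω' : (∑ m ∈ Finset.Icc 1 n, X m ω) < C * (n : ℝ) ^ (1 - δ) := hEω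
      show Real.exp (l * t) ≤ W ω
      have htle : t ≤ (∑ m ∈ Finset.Icc 1 n, p m ω) - ∑ m ∈ Finset.Icc 1 n, X m ω := by
        have : t = Cp * (n : ℝ) ^ (1 - δ) - C * (n : ℝ) ^ (1 - δ) := by rw [ht, hε]; ring
        linarith [hEω']
      exact Real.exp_le_exp.2 (mul_le_mul_of_nonneg_left htle hl0.le)
    -- Markov
    have hmark := mul_meas_ge_le_integral_of_nonneg
      (Filter.Eventually.of_forall fun ω => (Real.exp_pos _).le : 0 ≤ᵐ[P] W)
      hWint (Real.exp (l * t))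
    have hWle : ∫ ω, W ω ∂P ≤ Real.exp ((n : ℝ) * l ^ 2) := hWmom
    have htoReal : (P {ω | (∑ m ∈ Finset.Icc 1 n, X m ω) < C * (n : ℝ) ^ (1 - δ)}).toReal ≤
        Real.exp ((n : ℝ) * l ^ 2 - l * t) := by
      have h1 : (P {ω | (∑ m ∈ Finset.Icc 1 n, X m ω) < C * (n : ℝ) ^ (1 - δ)}).toReal ≤
          (P {ω | Real.exp (l * t) ≤ W ω}).toReal :=
        ENNReal.toReal_mono (measure_ne_top _ _) hsub
      have h2 : (P {ω | Real.exp (l * t) ≤ W ω}).toReal ≤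
          Real.exp ((n : ℝ) * l ^ 2) / Real.exp (l * t) := by
        rw [le_div_iff₀ (Real.exp_pos _), mul_comm]
        exact hmark.trans hWle
      rw [← Real.exp_sub] at h2
      linarith
    -- exponent computation
    have hexp : (n : ℝ) * l ^ 2 - l * t = -(c * (n : ℝ) ^ η) := by
      have key1 : (n : ℝ) ^ (1 - 2 * δ) = (n : ℝ) * ((n : ℝ) ^ (-δ) * (n : ℝ) ^ (-δ)) := by
        rw [show (1 - 2 * δ : ℝ) = 1 + (-δ + -δ) by ring, Real.rpow_add hnpos,
          Real.rpow_add hnpos, Real.rpow_one]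
      have key2 : (n : ℝ) ^ (1 - 2 * δ) = (n : ℝ) ^ (-δ) * (n : ℝ) ^ (1 - δ) := by
        rw [show (1 - 2 * δ : ℝ) = -δ + (1 - δ) by ring, Real.rpow_add hnpos]
      calc (n : ℝ) * l ^ 2 - l * t
          = (ε ^ 2 / 4) * ((n : ℝ) * ((n : ℝ) ^ (-δ) * (n : ℝ) ^ (-δ)))
            - (ε ^ 2 / 2) * ((n : ℝ) ^ (-δ) * (n : ℝ) ^ (1 - δ)) := by rw [hl, ht]; ring
        _ = (ε ^ 2 / 4) * (n : ℝ) ^ (1 - 2 * δ) - (ε ^ 2 / 2) * (n : ℝ) ^ (1 - 2 * δ) := by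
            rw [← key1, ← key2]
        _ = -(c * (n : ℝ) ^ η) := by rw [hc, hη]; ring
    rw [hexp] at htoReal
    calc P {ω | (∑ m ∈ Finset.Icc 1 n, X m ω) < C * (n : ℝ) ^ (1 - δ)}
        = ENNReal.ofReal ((P {ω | (∑ m ∈ Finset.Icc 1 n, X m ω)
            < C * (n : ℝ) ^ (1 - δ)}).toReal) := (ENNReal.ofReal_toReal (measure_ne_top _ _)).symm
      _ ≤ ENNReal.ofReal (Real.exp (-(c * (n : ℝ) ^ η))) := ENNReal.ofReal_le_ofReal htoReal
  -- summability
  calc ∑' n : ℕ, (n : ENNReal) *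
        P {ω | (∑ m ∈ Finset.Icc 1 n, X m ω) < C * (n : ℝ) ^ (1 - δ)}
      ≤ ∑' n : ℕ, ENNReal.ofReal ((n : ℝ) * Real.exp (-(c * (n : ℝ) ^ η))) := by
        refine ENNReal.tsum_le_tsum fun n => ?_
        rcases Nat.eq_zero_or_pos n with rfl | hn
        · simp
        calc (n : ENNReal) * P {ω | (∑ m ∈ Finset.Icc 1 n, X m ω) < C * (n : ℝ) ^ (1 - δ)}
            ≤ (n : ENNReal) * ENNReal.ofReal (Real.exp (-(c * (n : ℝ) ^ η))) :=
              mul_le_mul_right (claim n hn) _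
          _ = ENNReal.ofReal ((n : ℝ) * Real.exp (-(c * (n : ℝ) ^ η))) := by
              rw [← ENNReal.ofReal_natCast n, ← ENNReal.ofReal_mul (by positivity)]
    _ = ENNReal.ofReal (∑' n : ℕ, (n : ℝ) * Real.exp (-(c * (n : ℝ) ^ η))) :=
        (ENNReal.ofReal_tsum_of_nonneg (fun n => by positivity)
          (summable_mul_exp_neg_rpow hc0 hη0)).symm
    _ < ⊤ := ENNReal.ofReal_lt_top
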